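/- The generalized Gabidulin code G_{n,k,s} = { Σ_{i=0}^{k-1} a_i x^{q^{si}} : a_i ∈ F_{q^n} }, with gcd(s,n) = 1 and 1 ≤ k ≤ n, is an F_q-subspace of End_{F_q}(F_{q^n}) of F_q-dimension kn in which every nonzero element has rank at least n - k + 1; i.e., it is an MRD code with minimum distance d = n - k + 1 attaining the Singleton-like bound q^{n(n-d+1)}. -/

import Mathlib

open LinearMap Finset Module

section Gab

variable {K F : Type} [Field K] [Fintype K] [Field F] [Fintype F] [Algebra K F]

variable (q : ℕ)

/-- The `q^m`-power map as a `K`-linear endomorphism of `F`. -/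
def gabPow (hadd : ∀ (m : ℕ) (x y : F), (x + y) ^ q ^ m = x ^ q ^ m + y ^ q ^ m)
    (hsmul : ∀ (m : ℕ) (c : K) (x : F), (c • x) ^ q ^ m = c • x ^ q ^ m) (m : ℕ) :
    F →ₗ[K] F where
  toFun x := x ^ q ^ m
  map_add' x y := hadd m x y
  map_smul' c x := hsmul m c x

variable (hadd : ∀ (m : ℕ) (x y : F), (x + y) ^ q ^ m = x ^ q ^ m + y ^ q ^ m)
    (hsmul : ∀ (m : ℕ) (c : K) (x : F), (c • x) ^ q ^ m = c • x ^ q ^ m)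

/-- The linearized polynomial `x ↦ ∑_{i<k} a i * x^(q^(s*i))`. -/
def gabMap (s : ℕ) (a : ℕ → F) (k : ℕ) : F →ₗ[K] F :=
  ∑ i ∈ Finset.range k, LinearMap.mulLeft K (a i) ∘ₗ gabPow q hadd hsmul (s * i)

@[simp] lemma gabMap_apply (s : ℕ) (a : ℕ → F) (k : ℕ) (x : F) :
    gabMap q hadd hsmul s a k x = ∑ i ∈ Finset.range k, a i * x ^ q ^ (s * i) := by
  simp [gabMap, gabPow]

lemma gabPow_pow (m m' : ℕ) (x : F) :
    (x ^ q ^ m) ^ q ^ m' = x ^ q ^ (m + m') := by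
  rw [← pow_mul, ← pow_add]

/-- Key lemma: a nonzero linearized polynomial with `k` terms has kernel of
dimension `< k`. -/
lemma gab_ker {n s : ℕ} (hq1 : 1 < q)
    (hK : Fintype.card K = q) (hF : Fintype.card F = q ^ n) (hs : Nat.gcd s n = 1) :
    ∀ k, k ≤ n → ∀ a : ℕ → F, (∃ i, i < k ∧ a i ≠ 0) →
      Module.finrank K (LinearMap.ker (gabMap q hadd hsmul s a k)) < k := by
  haveI : FiniteDimensional K F := Module.finite_iff_finite.mpr inferInstance
  have hq0 : ∀ m : ℕ, q ^ m ≠ 0 := fun m => (pow_pos (by omega : 0 < q) m).ne'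
  intro k
  induction k with
  | zero => rintro _ a ⟨i, hi, -⟩; omega
  | succ k ih =>
    intro hkn a ha
    by_cases hk0 : k = 0
    · subst hk0
      have hker : LinearMap.ker (gabMap q hadd hsmul s a 1) = ⊥ := by
        obtain ⟨i, hi, hai⟩ := ha
        interval_cases i
        rw [LinearMap.ker_eq_bot']
        intro x hx
        rw [gabMap_apply] at hx
        simp only [Finset.sum_range_one, Nat.mul_zero, pow_zero, pow_one] at hx
        exact (mul_eq_zero.mp hx).resolve_left hai
      rw [hker, finrank_bot]; omega
    · by_cases ha0 : a 0 = 0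
      · -- factor out the rightmost power map
        have hcomp : gabMap q hadd hsmul s a (k+1)
            = (gabMap q hadd hsmul s (fun j => a (j+1)) k).comp
                (gabPow q hadd hsmul s) := by
          ext x
          simp only [gabMap_apply, LinearMap.comp_apply, gabPow, LinearMap.coe_mk,
            AddHom.coe_mk]
          rw [Finset.sum_range_succ' (fun i => a i * x ^ q ^ (s * i)) k]
          simp only [ha0, zero_mul, add_zero, Nat.mul_zero]
          refine Finset.sum_congr rfl fun j _ => ?_
          rw [gabPow_pow]
          congr 2
          ring
        have hinj : Function.Injective (gabPow q hadd hsmul s) := by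
          rw [← LinearMap.ker_eq_bot, LinearMap.ker_eq_bot']
          intro x hx
          have : x ^ q ^ s = 0 := hx
          exact pow_eq_zero_iff (hq0 s) |>.mp this
        have hbij : Function.Bijective (gabPow q hadd hsmul s) :=
          ⟨hinj, (LinearMap.injective_iff_surjective).mp hinj⟩
        let e : F ≃ₗ[K] F := LinearEquiv.ofBijective _ hbij
        have hkereq : finrank K (LinearMap.ker (gabMap q hadd hsmul s a (k+1)))
            = finrank K (LinearMap.ker (gabMap q hadd hsmul s (fun j => a (j+1)) k)) := by
          rw [hcomp, LinearMap.ker_comp,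
            show gabPow q hadd hsmul s = (e : F →ₗ[K] F) from rfl,
            Submodule.comap_equiv_eq_map_symm, LinearEquiv.finrank_map_eq]
        have ha' : ∃ i, i < k ∧ a (i+1) ≠ 0 := by
          obtain ⟨i, hi, hai⟩ := ha
          rcases i with _ | j
          · exact absurd ha0 hai
          · exact ⟨j, by omega, hai⟩
        have := ih (by omega) (fun j => a (j+1)) ha'
        rw [hkereq]
        omega
      · -- main case : a 0 ≠ 0
        by_contra hcon
        push_neg at hcon
        set φ := gabMap q hadd hsmul s a (k+1) with hφdef
        have hker_ne : LinearMap.ker φ ≠ ⊥ := by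
          intro h
          rw [h, finrank_bot] at hcon
          omega
        obtain ⟨u, humem, hu0⟩ := (Submodule.ne_bot_iff _).mp hker_ne
        set b : ℕ → F := fun i => a i * u ^ q ^ (s * i) with hbdef
        set ψ := gabMap q hadd hsmul s b (k+1) with hψdef
        have hψφ : ψ = φ ∘ₗ LinearMap.mulLeft K u := by
          ext x
          simp only [hψdef, hφdef, gabMap_apply, LinearMap.comp_apply,
            LinearMap.mulLeft_apply]
          refine Finset.sum_congr rfl fun i _ => ?_
          rw [mul_pow]
          ring
        have hbij : Function.Bijective (LinearMap.mulLeft K u) :=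
          mulLeft_bijective₀ u hu0
        let e : F ≃ₗ[K] F := LinearEquiv.ofBijective _ hbij
        have hkerψ : finrank K (LinearMap.ker ψ) = finrank K (LinearMap.ker φ) := by
          rw [hψφ, LinearMap.ker_comp,
            show LinearMap.mulLeft K u = (e : F →ₗ[K] F) from rfl,
            Submodule.comap_equiv_eq_map_symm, LinearEquiv.finrank_map_eq]
        have hsum0 : ∑ i ∈ Finset.range (k+1), b i = 0 := by
          have h1 : ψ 1 = 0 := by
            rw [hψφ]
            simp only [LinearMap.comp_apply, LinearMap.mulLeft_apply, mul_one]
            exact humem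
          rw [hψdef, gabMap_apply] at h1
          simpa using h1
        set S : ℕ → F := fun m => ∑ i ∈ Finset.range m, b i with hSdef
        set c : ℕ → F := fun j => -(S (j+1)) with hcdef
        set η := gabMap q hadd hsmul s c k with hηdef
        set D : F →ₗ[K] F := gabPow q hadd hsmul s - LinearMap.id with hDdef
        have hDapp : ∀ x : F, D x = x ^ q ^ s - x := fun x => rfl
        have hψη : ψ = η ∘ₗ D := by
          ext x
          simp only [hψdef, hηdef, gabMap_apply, LinearMap.comp_apply]
          have habel := Finset.sum_range_by_parts
            (fun i => x ^ q ^ (s * i)) b (k+1)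
          simp only [Nat.add_sub_cancel, smul_eq_mul] at habel
          rw [show (∑ i ∈ Finset.range (k+1), b i) = 0 from hsum0, mul_zero,
            zero_sub] at habel
          have hterm : ∀ i, i ∈ Finset.range k →
              (x ^ q ^ (s * (i+1)) - x ^ q ^ (s * i)) * (∑ j ∈ Finset.range (i+1), b j)
              = -(c i * (D x) ^ q ^ (s * i)) := by
            intro i _
            have hDp : (D x) ^ q ^ (s * i)
                = x ^ q ^ (s * (i + 1)) - x ^ q ^ (s * i) := by
              rw [hDapp]
              have := (gabPow q hadd hsmul (s * i)).map_sub (x ^ q ^ s) x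
              simp only [gabPow, LinearMap.coe_mk, AddHom.coe_mk] at this
              rw [this, gabPow_pow]
              congr 3
              ring
            rw [hDp, hcdef]
            simp only [neg_mul, neg_neg, hSdef]
            ring
          calc ∑ i ∈ Finset.range (k+1), b i * x ^ q ^ (s * i)
              = ∑ i ∈ Finset.range (k+1), x ^ q ^ (s * i) * b i := by
                refine Finset.sum_congr rfl fun i _ => mul_comm _ _
            _ = -∑ i ∈ Finset.range k,
                  (x ^ q ^ (s * (i+1)) - x ^ q ^ (s * i)) * (∑ j ∈ Finset.range (i+1), b j) := habel
            _ = ∑ i ∈ Finset.range k, c i * (D x) ^ q ^ (s * i) := by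
                rw [← Finset.sum_neg_distrib]
                refine Finset.sum_congr rfl fun i hi => ?_
                rw [hterm i hi, neg_neg]
        have hc : ∃ j, j < k ∧ c j ≠ 0 := by
          by_contra hcc
          push_neg at hcc
          have hSall : ∀ m, m ≤ k + 1 → S m = 0 := by
            intro m hm
            rcases m with _ | j
            · simp [hSdef]
            · rcases Nat.lt_or_ge j k with h | h
              · have := hcc j h
                rwa [hcdef, neg_eq_zero] at this
              · have hjk : j = k := by omega
                subst hjk
                exact hsum0
          have hball : ∀ i, i < k + 1 → b i = 0 := by
            intro i hi
            have h1 := hSall (i+1) (by omega)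
            have h2 := hSall i (by omega)
            have h3 : S (i+1) = S i + b i := Finset.sum_range_succ b i
            rw [h1, h2, zero_add] at h3
            exact h3.symm
          obtain ⟨i, hi, hai⟩ := ha
          have := hball i hi
          rw [hbdef] at this
          rcases mul_eq_zero.mp this with h | h
          · exact hai h
          · exact hu0 (pow_eq_zero_iff (hq0 _) |>.mp h)
        -- the kernel of D has dimension at most 1
        have hn2 : 2 ≤ n := by omega
        have hqfix : ∀ x : F, x ∈ LinearMap.ker D → x ^ q = x := by
          intro x hx
          have hfix : x ^ q ^ s = x := by
            have := LinearMap.mem_ker.mp hx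
            rw [hDapp, sub_eq_zero] at this
            exact this
          have hsj : ∀ j, x ^ q ^ (s * j) = x := by
            intro j
            induction j with
            | zero => simp
            | succ j hj =>
              have hmul : s * (j + 1) = s * j + s := by ring
              rw [hmul, ← gabPow_pow q (s*j) s x, hj, hfix]
          have hcard : x ^ q ^ n = x := by
            have := FiniteField.pow_card x
            rwa [hF] at this
          have hnm : ∀ m, x ^ q ^ (n * m) = x := by
            intro m
            induction m with
            | zero => simp
            | succ m hm =>
              have hmul : n * (m + 1) = n * m + n := by ring
              rw [hmul, ← gabPow_pow q (n*m) n x, hm, hcard]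
          obtain ⟨d, -, hd⟩ := Nat.exists_mul_mod_eq_one_of_coprime hs (by omega)
          have hdm : s * d = n * (s * d / n) + 1 := by
            conv_lhs => rw [← Nat.div_add_mod (s * d) n]
            rw [hd]
          have := hsj d
          rw [hdm, ← gabPow_pow q (n * (s * d / n)) 1 x, hnm, pow_one] at this
          exact this
        haveI : Fintype (LinearMap.ker D) := Fintype.ofFinite _
        have hcard1 : Fintype.card (LinearMap.ker D) = q ^ finrank K (LinearMap.ker D) := by
          rw [← hK]
          exact card_eq_pow_finrank
        have hcard2 : Fintype.card (LinearMap.ker D) ≤ q := by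
          classical
          have himg : Fintype.card (LinearMap.ker D)
              = ((Finset.univ : Finset (LinearMap.ker D)).image Subtype.val).card := by
            rw [Finset.card_image_of_injective _ Subtype.val_injective, Finset.card_univ]
          rw [himg]
          have hR : ((Finset.univ : Finset (LinearMap.ker D)).image Subtype.val)
              ⊆ (Polynomial.X ^ q - Polynomial.X : Polynomial F).roots.toFinset := by
            intro x hx
            simp only [Finset.mem_image, Finset.mem_univ, true_and] at hx
            obtain ⟨⟨y, hy⟩, rfl⟩ := hx
            rw [Multiset.mem_toFinset, Polynomial.mem_roots
              (FiniteField.X_pow_card_sub_X_ne_zero F hq1)]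
            simp only [Polynomial.IsRoot.def, Polynomial.eval_sub, Polynomial.eval_pow,
              Polynomial.eval_X]
            rw [hqfix y hy, sub_self]
          calc ((Finset.univ : Finset (LinearMap.ker D)).image Subtype.val).card
              ≤ (Polynomial.X ^ q - Polynomial.X : Polynomial F).roots.toFinset.card :=
                Finset.card_le_card hR
            _ ≤ Multiset.card (Polynomial.X ^ q - Polynomial.X : Polynomial F).roots :=
                Multiset.toFinset_card_le _
            _ ≤ (Polynomial.X ^ q - Polynomial.X : Polynomial F).natDegree :=
                Polynomial.card_roots' _
            _ = q := FiniteField.X_pow_card_sub_X_natDegree_eq F hq1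
        have hDker : finrank K (LinearMap.ker D) ≤ 1 := by
          rw [hcard1] at hcard2
          by_contra hgt
          push_neg at hgt
          have : q ^ 2 ≤ q ^ finrank K (LinearMap.ker D) :=
            Nat.pow_le_pow_right (by omega) hgt
          nlinarith
        have hη : finrank K (LinearMap.ker η) < k := ih (by omega) c hc
        have hle : finrank K (LinearMap.ker ψ)
            ≤ finrank K (LinearMap.ker η) + finrank K (LinearMap.ker D) := by
          have hkerψD : LinearMap.ker ψ = Submodule.comap D (LinearMap.ker η) := by
            rw [hψη, LinearMap.ker_comp]
          set D' := D.domRestrict (LinearMap.ker ψ) with hD'def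
          have h1 : finrank K (LinearMap.ker ψ)
              = finrank K (LinearMap.range D') + finrank K (LinearMap.ker D') :=
            (D'.finrank_range_add_finrank_ker).symm
          have h2 : LinearMap.range D' ≤ LinearMap.ker η := by
            rintro y ⟨⟨x, hx⟩, rfl⟩
            rw [hkerψD] at hx
            exact hx
          have h3 : finrank K (LinearMap.ker D') ≤ finrank K (LinearMap.ker D) := by
            rw [← Submodule.finrank_map_subtype_eq (LinearMap.ker ψ) (LinearMap.ker D')]
            apply Submodule.finrank_mono
            rintro y ⟨⟨x, hx⟩, hxk, rfl⟩
            exact hxk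
          have h2' := Submodule.finrank_mono h2
          omega
        omega

end Gab

/-- The generalized Gabidulin code `G_{n,k,s}` is an `F_q`-subspace of
`End_{F_q}(F_{qⁿ})` of dimension `kn`, every nonzero element of which has rank at
least `n - k + 1`; it attains the Singleton-like bound `q^(n(n-d+1))` with
`d = n - k + 1`, i.e. it is an MRD code. -/
theorem stmt_10 (q n k s : ℕ) (hq : IsPrimePow q) (hn : 0 < n)
    (hk1 : 1 ≤ k) (hkn : k ≤ n) (hs : Nat.gcd s n = 1)
    (K F : Type) [Field K] [Fintype K] [Field F] [Fintype F] [Algebra K F]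
    (hK : Fintype.card K = q) (hF : Fintype.card F = q ^ n) :
    ∃ G : Submodule K (F →ₗ[K] F),
      (∀ φ : F →ₗ[K] F, φ ∈ G ↔
        ∃ a : ℕ → F, ∀ x : F, φ x = ∑ i ∈ Finset.range k, a i * x ^ q ^ (s * i)) ∧
      Module.finrank K G = k * n ∧
      (∀ φ ∈ G, φ ≠ 0 → n - k + 1 ≤ Module.finrank K (LinearMap.range φ)) ∧
      Nat.card G = q ^ (n * (n - (n - k + 1) + 1)) := by
  classical
  obtain ⟨p, t, hpp, ht, rfl⟩ := hq
  have hp : p.Prime := Nat.prime_iff.mpr hpp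
  haveI : CharP F (ringChar F) := ringChar.charP F
  obtain ⟨n', hp', hcard⟩ := FiniteField.card F (ringChar F)
  have hpr : ringChar F = p := by
    have h1 : ringChar F ∣ p ^ (t * n) := by
      rw [pow_mul, ← hF, hcard]
      exact dvd_pow_self _ n'.ne_zero
    exact (Nat.prime_dvd_prime_iff_eq hp' hp).mp (hp'.dvd_of_dvd_pow h1)
  haveI hcharF : CharP F p := hpr ▸ ringChar.charP F
  haveI : Fact p.Prime := ⟨hp⟩
  have hq1 : 1 < p ^ t := by
    have := Fintype.one_lt_card (α := K)
    rwa [hK] at this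
  have hadd : ∀ (m : ℕ) (x y : F), (x + y) ^ (p ^ t) ^ m = x ^ (p ^ t) ^ m + y ^ (p ^ t) ^ m := by
    intro m x y
    rw [← pow_mul]
    exact add_pow_char_pow x y p (t * m)
  have hsmul : ∀ (m : ℕ) (c : K) (x : F), (c • x) ^ (p ^ t) ^ m = c • x ^ (p ^ t) ^ m := by
    intro m c x
    rw [Algebra.smul_def, Algebra.smul_def, mul_pow, ← map_pow]
    congr 2
    rw [show p ^ t = Fintype.card K from hK.symm]
    exact FiniteField.pow_card_pow m c
  haveI : FiniteDimensional K F := Module.finite_iff_finite.mpr inferInstance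
  have hfr : finrank K F = n := by
    have hc := card_eq_pow_finrank (K := K) (V := F)
    rw [hK, hF] at hc
    exact (Nat.pow_right_injective hq1 hc.symm)
  -- extension of a finite tuple to ℕ
  let ext : (Fin k → F) → (ℕ → F) := fun a i => if h : i < k then a ⟨i, h⟩ else 0
  have hext_add : ∀ a b : Fin k → F, ext (a + b) = ext a + ext b := by
    intro a b
    funext i
    by_cases h : i < k <;> simp [ext, h]
  have hext_smul : ∀ (c : K) (a : Fin k → F), ext (c • a) = fun i => c • ext a i := by
    intro c a
    funext i
    by_cases h : i < k <;> simp [ext, h]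
  have hgab_add : ∀ a b : ℕ → F,
      gabMap (p ^ t) hadd hsmul s (a + b) k
        = gabMap (p ^ t) hadd hsmul s a k + gabMap (p ^ t) hadd hsmul s b k := by
    intro a b
    ext x
    simp [gabMap_apply, add_mul, Finset.sum_add_distrib]
  have hgab_smul : ∀ (c : K) (a : ℕ → F),
      gabMap (p ^ t) hadd hsmul s (fun i => c • a i) k
        = c • gabMap (p ^ t) hadd hsmul s a k := by
    intro c a
    ext x
    simp [gabMap_apply, Finset.smul_sum, smul_mul_assoc]
  let Φ : (Fin k → F) →ₗ[K] (F →ₗ[K] F) :=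
    { toFun := fun a => gabMap (p ^ t) hadd hsmul s (ext a) k
      map_add' := fun a b => by
        show gabMap (p ^ t) hadd hsmul s (ext (a + b)) k = _
        rw [hext_add, hgab_add]
      map_smul' := fun c a => by
        show gabMap (p ^ t) hadd hsmul s (ext (c • a)) k
          = c • gabMap (p ^ t) hadd hsmul s (ext a) k
        rw [hext_smul, hgab_smul] }
  have hΦ_apply : ∀ (a : Fin k → F), Φ a = gabMap (p ^ t) hadd hsmul s (ext a) k := fun a => rfl
  -- every element of the range keeps kernel small
  have hker_small : ∀ a : Fin k → F, a ≠ 0 →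
      finrank K (LinearMap.ker (Φ a)) < k := by
    intro a ha
    have : ∃ j : Fin k, a j ≠ 0 := by
      by_contra hno
      push_neg at hno
      exact ha (funext fun j => hno j)
    obtain ⟨j, hj⟩ := this
    have hExt : ∃ i, i < k ∧ ext a i ≠ 0 := by
      refine ⟨j.1, j.2, ?_⟩
      simp only [ext, j.2, dif_pos]
      simpa using hj
    exact gab_ker (p ^ t) hadd hsmul hq1 hK hF hs k hkn (ext a) hExt
  have hΦinj : Function.Injective Φ := by
    rw [← LinearMap.ker_eq_bot, LinearMap.ker_eq_bot']
    intro a ha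
    by_contra hne
    have h1 := hker_small a hne
    rw [ha, LinearMap.ker_zero] at h1
    rw [finrank_top, hfr] at h1
    omega
  refine ⟨LinearMap.range Φ, ?_, ?_, ?_, ?_⟩
  · -- membership
    intro φ
    constructor
    · rintro ⟨a, rfl⟩
      refine ⟨ext a, fun x => ?_⟩
      rw [hΦ_apply, gabMap_apply]
    · rintro ⟨a, hx⟩
      refine ⟨fun i => a i, ?_⟩
      ext x
      rw [hΦ_apply, gabMap_apply, hx x]
      refine Finset.sum_congr rfl fun i hi => ?_
      have hik : i < k := Finset.mem_range.mp hi
      simp [ext, hik]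
  · -- dimension
    rw [LinearMap.finrank_range_of_inj hΦinj]
    rw [Module.finrank_pi_fintype]
    simp [hfr, mul_comm]
  · -- rank bound
    rintro φ ⟨a, rfl⟩ hφ0
    have ha : a ≠ 0 := by
      rintro rfl
      exact hφ0 (map_zero Φ)
    have h1 := hker_small a ha
    have h2 := LinearMap.finrank_range_add_finrank_ker (Φ a)
    rw [hfr] at h2
    omega
  · -- cardinality
    haveI : Finite (F →ₗ[K] F) :=
      Finite.of_injective (fun f => (f : F → F)) DFunLike.coe_injective
    haveI : Fintype (LinearMap.range Φ) := Fintype.ofFinite _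
    rw [Nat.card_eq_fintype_card]
    have hc : Fintype.card (LinearMap.range Φ)
        = (p ^ t) ^ finrank K (LinearMap.range Φ) := by
      rw [← hK]
      exact card_eq_pow_finrank (K := K) (V := LinearMap.range Φ)
    rw [hc, LinearMap.finrank_range_of_inj hΦinj, Module.finrank_pi_fintype]
    have he : n - (n - k + 1) + 1 = k := by omega
    rw [he]
    simp [hfr, mul_comm]
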